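/- arXiv:1804.05562 — 8 statements merged into one kernel-verified Lean document; each statement's English description precedes it below -/
import Mathlib

section
/- Let g be a finite-dimensional nilpotent Lie algebra with [g,g] ≠ {0}. Then there exists a linear functional ξ ∈ g* such that ξ does not vanish identically on [g,g], the commutator ideal [g,g] is contained in the coadjoint isotropy subalgebra g(ξ) = {X ∈ g : ξ([X, g]) = 0}, and g(ξ) is an ideal of g. -/
open Module

/-- The coadjoint isotropy subalgebra `g(ξ) = {X ∈ g : ξ([X,Y]) = 0 for all Y}`. -/
noncomputable def coadjointIsotropy {L : Type*} [LieRing L] [LieAlgebra ℝ L]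
    (ξ : Module.Dual ℝ L) : Submodule ℝ L where
  carrier := {X | ∀ Y : L, ξ ⁅X, Y⁆ = 0}
  add_mem' := by
    intro a b ha hb Y
    simp [add_lie, ha Y, hb Y]
  zero_mem' := by intro Y; simp
  smul_mem' := by
    intro c a ha Y
    simp [smul_lie, ha Y]

/-- If `g` is a finite-dimensional nilpotent Lie algebra with `[g,g] ≠ 0`, then there is
`ξ ∈ g*` not vanishing on `[g,g]` with `[g,g] ⊆ g(ξ)`, and `g(ξ)` is an ideal of `g`. -/
theorem stmt_3 {L : Type*} [LieRing L] [LieAlgebra ℝ L] [FiniteDimensional ℝ L]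
    (hnil : LieRing.IsNilpotent L)
    (hcomm : LieAlgebra.derivedSeries ℝ L 1 ≠ ⊥) :
    ∃ ξ : Module.Dual ℝ L,
      ¬ (∀ x ∈ LieAlgebra.derivedSeries ℝ L 1, ξ x = 0) ∧
      (LieAlgebra.derivedSeries ℝ L 1).toSubmodule ≤ coadjointIsotropy ξ ∧
      (∀ z : L, ∀ x ∈ coadjointIsotropy ξ, ⁅z, x⁆ ∈ coadjointIsotropy ξ) := by
  have hds : LieAlgebra.derivedSeries ℝ L 1 = LieModule.lowerCentralSeries ℝ L L 1 := by
    simp [LieAlgebra.derivedSeries_def]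
  -- strict inclusion lcs 2 < lcs 1
  have hne : LieModule.lowerCentralSeries ℝ L L 2 ≠ LieModule.lowerCentralSeries ℝ L L 1 := by
    intro h
    have hstab : ∀ k, LieModule.lowerCentralSeries ℝ L L (k + 1) =
        LieModule.lowerCentralSeries ℝ L L 1 := by
      intro k
      induction k with
      | zero => rfl
      | succ n ih =>
        have : LieModule.lowerCentralSeries ℝ L L (n + 2) =
            ⁅(⊤ : LieIdeal ℝ L), LieModule.lowerCentralSeries ℝ L L (n + 1)⁆ :=
          LieModule.lowerCentralSeries_succ ℝ L L (n + 1)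
        rw [this, ih, ← LieModule.lowerCentralSeries_succ ℝ L L 1]
        exact h
    obtain ⟨k, hk⟩ := LieModule.IsNilpotent.nilpotent ℝ L L
    cases k with
    | zero =>
      apply hcomm
      rw [hds]
      exact le_bot_iff.mp (hk ▸ LieModule.antitone_lowerCentralSeries ℝ L L (Nat.zero_le 1))
    | succ n =>
      exact hcomm (by rw [hds, ← hstab n, hk])
  -- pick v ∈ lcs 1 \ lcs 2
  have hle : LieModule.lowerCentralSeries ℝ L L 2 ≤ LieModule.lowerCentralSeries ℝ L L 1 :=
    LieModule.antitone_lowerCentralSeries ℝ L L (by norm_num)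
  obtain ⟨v, hv1, hv2⟩ : ∃ v, v ∈ LieModule.lowerCentralSeries ℝ L L 1 ∧
      v ∉ LieModule.lowerCentralSeries ℝ L L 2 := by
    by_contra hc
    push_neg at hc
    exact hne (le_antisymm hle fun x hx => hc x hx)
  -- build ξ vanishing on lcs 2 with ξ v ≠ 0
  set S : Submodule ℝ L := (LieModule.lowerCentralSeries ℝ L L 2).toSubmodule with hS
  have hvS : (Submodule.Quotient.mk v : L ⧸ S) ≠ 0 := fun h =>
    hv2 ((Submodule.Quotient.mk_eq_zero S).mp h)
  obtain ⟨f, hf⟩ : ∃ f : Module.Dual ℝ (L ⧸ S), f (Submodule.Quotient.mk v) ≠ 0 := by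
    by_contra hc
    push_neg at hc
    exact hvS ((Module.forall_dual_apply_eq_zero_iff ℝ _).mp hc)
  refine ⟨f.comp S.mkQ, ?_, ?_, ?_⟩
  · intro hall
    exact hf (hall v (hds ▸ hv1))
  · intro x hx Y
    have hmem : ⁅x, Y⁆ ∈ LieModule.lowerCentralSeries ℝ L L 2 := by
      rw [show (2:ℕ) = 1+1 from rfl, LieModule.lowerCentralSeries_succ]
      have hx1 : x ∈ LieModule.lowerCentralSeries ℝ L L 1 := by
        rw [← hds]; exact hx
      have : ⁅Y, x⁆ ∈ ⁅(⊤ : LieIdeal ℝ L), LieModule.lowerCentralSeries ℝ L L 1⁆ :=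
        LieSubmodule.lie_mem_lie (LieSubmodule.mem_top Y) hx1
      simpa using (⁅(⊤ : LieIdeal ℝ L), LieModule.lowerCentralSeries ℝ L L 1⁆).neg_mem this
    have h0 : S.mkQ ⁅x, Y⁆ = 0 := (Submodule.Quotient.mk_eq_zero S).mpr hmem
    show f (S.mkQ ⁅x, Y⁆) = 0
    rw [h0, map_zero]
  · intro z x _ Y
    have hmem : ⁅⁅z, x⁆, Y⁆ ∈ LieModule.lowerCentralSeries ℝ L L 2 := by
      rw [show (2:ℕ) = 1+1 from rfl, LieModule.lowerCentralSeries_succ]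
      have h1 : ⁅z, x⁆ ∈ LieModule.lowerCentralSeries ℝ L L 1 := by
        rw [LieModule.lowerCentralSeries_succ, LieModule.lowerCentralSeries_zero]
        exact LieSubmodule.lie_mem_lie (LieSubmodule.mem_top z) (LieSubmodule.mem_top x)
      have : ⁅Y, ⁅z, x⁆⁆ ∈ ⁅(⊤ : LieIdeal ℝ L), LieModule.lowerCentralSeries ℝ L L 1⁆ :=
        LieSubmodule.lie_mem_lie (LieSubmodule.mem_top Y) h1
      simpa using (⁅(⊤ : LieIdeal ℝ L), LieModule.lowerCentralSeries ℝ L L 1⁆).neg_mem this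
    have h0 : S.mkQ ⁅⁅z, x⁆, Y⁆ = 0 := (Submodule.Quotient.mk_eq_zero S).mpr hmem
    show f (S.mkQ ⁅⁅z, x⁆, Y⁆) = 0
    rw [h0, map_zero]
end

section
/- Let g be a finite-dimensional nilpotent Lie algebra of class T, meaning that for all ξ ∈ g* not vanishing on [g,g], the coadjoint isotropy subalgebra g(ξ) has dimension equal to ind g := min{dim g(η) : η ∈ g*}. Then dim g ≤ ind g + dim [g,g]^⊥, equivalently dim [g,g] ≤ ind g. -/
open Module

/-- `ind g := min {dim g(ξ) : ξ ∈ g*}`. -/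
noncomputable def lieIndex (L : Type*) [LieRing L] [LieAlgebra ℝ L] : ℕ :=
  sInf (Set.range fun ξ : Module.Dual ℝ L => finrank ℝ (coadjointIsotropy ξ))

/-- `g` is of class `T` if `dim g(ξ) = ind g` for every `ξ ∈ g*` not vanishing on `[g,g]`. -/
def IsClassT (L : Type*) [LieRing L] [LieAlgebra ℝ L] : Prop :=
  ∀ ξ : Module.Dual ℝ L,
    ¬ (∀ x ∈ LieAlgebra.derivedSeries ℝ L 1, ξ x = 0) →
      finrank ℝ (coadjointIsotropy ξ) = lieIndex L

theorem stmt_4 {L : Type*} [LieRing L] [LieAlgebra ℝ L] [FiniteDimensional ℝ L]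
    (hnil : LieRing.IsNilpotent L) (hT : IsClassT L) :
    finrank ℝ L ≤ lieIndex L +
      finrank ℝ ((LieAlgebra.derivedSeries ℝ L 1).toSubmodule.dualAnnihilator) ∧
    finrank ℝ (LieAlgebra.derivedSeries ℝ L 1).toSubmodule ≤ lieIndex L := by
  set D : LieIdeal ℝ L := LieAlgebra.derivedSeries ℝ L 1 with hDdef
  -- the key inequality
  have key : finrank ℝ D.toSubmodule ≤ lieIndex L := by
    by_cases hbot : D = ⊥
    · rw [hbot]; simp
    · -- D coincides with the first lower central series term
      have hD1 : D = LieModule.lowerCentralSeries ℝ L L 1 := by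
        rw [hDdef]
        rfl
      set E : LieIdeal ℝ L := ⁅(⊤ : LieIdeal ℝ L), D⁆ with hEdef
      have hE2 : (E : LieSubmodule ℝ L L) = LieModule.lowerCentralSeries ℝ L L 2 := by
        rw [hEdef, hD1]
        rfl
      have hle : E ≤ D := LieSubmodule.lie_le_right D ⊤
      have hne : E ≠ D := by
        intro h
        -- then the lower central series stabilises at D ≠ ⊥, contradiction
        have hstab : ∀ k : ℕ, LieModule.lowerCentralSeries ℝ L L (k + 1) = D := by
          intro k
          induction k with
          | zero => exact hD1.symm
          | succ n ih =>
            rw [LieModule.lowerCentralSeries_succ, ih, ← hEdef, h]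
        obtain ⟨k, hk⟩ := (by haveI := hnil; exact LieModule.IsNilpotent.nilpotent ℝ L L)
        cases k with
        | zero =>
          exact hbot (le_bot_iff.mp (hD1 ▸ (hk ▸ LieModule.antitone_lowerCentralSeries ℝ L L (Nat.zero_le 1))))
        | succ n => exact hbot ((hstab n).symm.trans hk)
      obtain ⟨x, hxD, hxE⟩ := SetLike.exists_of_lt (lt_of_le_of_ne hle hne)
      -- choose a functional vanishing on E but not at x
      obtain ⟨ξ, hξx, hξE⟩ :=
        Submodule.exists_dual_map_eq_bot_of_notMem (p := E.toSubmodule) (x := x)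
          (by simpa using hxE) inferInstance
      have hξE' : ∀ y ∈ E, ξ y = 0 := by
        intro y hy
        have : ξ y ∈ E.toSubmodule.map ξ := Submodule.mem_map_of_mem hy
        rw [hξE] at this
        simpa using this
      -- D is contained in the isotropy of ξ
      have hsub : D.toSubmodule ≤ coadjointIsotropy ξ := by
        intro X hX Y
        have hmem : ⁅Y, X⁆ ∈ E :=
          LieSubmodule.lie_mem_lie (LieSubmodule.mem_top Y) hX
        have : ⁅X, Y⁆ = -⁅Y, X⁆ := by rw [← lie_skew]
        rw [this, map_neg, hξE' _ hmem, neg_zero]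
      have hclass : finrank ℝ (coadjointIsotropy ξ) = lieIndex L := by
        apply hT
        intro h
        exact hξx (h x hxD)
      calc finrank ℝ D.toSubmodule ≤ finrank ℝ (coadjointIsotropy ξ) :=
            Submodule.finrank_mono hsub
        _ = lieIndex L := hclass
  refine ⟨?_, key⟩
  have hq : finrank ℝ (L ⧸ D.toSubmodule) + finrank ℝ D.toSubmodule = finrank ℝ L :=
    Submodule.finrank_quotient_add_finrank _
  have hann : finrank ℝ D.toSubmodule.dualAnnihilator = finrank ℝ (L ⧸ D.toSubmodule) :=
    (LinearEquiv.finrank_eq (Subspace.quotEquivAnnihilator D.toSubmodule)).symm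
  omega
end

section
/- Let g = g₁ × g₂ be a product of finite-dimensional nilpotent Lie algebras. If g is of class T (i.e., dim g(ξ) = min_{η} dim g(η) for every ξ ∈ g* not vanishing on [g,g]), then at least one of g₁ and g₂ is abelian. -/
open Module

/-- The product of two Lie rings. -/
instance prodLieRing {L₁ L₂ : Type*} [LieRing L₁] [LieRing L₂] : LieRing (L₁ × L₂) where
  bracket x y := (⁅x.1, y.1⁆, ⁅x.2, y.2⁆)
  add_lie x y z := by ext <;> simp [add_lie]
  lie_add x y z := by ext <;> simp [lie_add]
  lie_self x := by ext <;> simp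
  leibniz_lie x y z := by
    ext
    · exact leibniz_lie x.1 y.1 z.1
    · exact leibniz_lie x.2 y.2 z.2

/-- The product of two Lie algebras. -/
instance prodLieAlgebra {L₁ L₂ : Type*} [LieRing L₁] [LieRing L₂]
    [LieAlgebra ℝ L₁] [LieAlgebra ℝ L₂] : LieAlgebra ℝ (L₁ × L₂) where
  lie_smul t x y := by
    ext
    · exact lie_smul t x.1 y.1
    · exact lie_smul t x.2 y.2


section Aux

/-- A submodule product is equivalent to the product of the submodules. -/
def subProdEquiv {M N : Type*} [AddCommGroup M] [AddCommGroup N] [Module ℝ M] [Module ℝ N]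
    (p : Submodule ℝ M) (q : Submodule ℝ N) : (p.prod q) ≃ₗ[ℝ] p × q where
  toFun x := (⟨x.1.1, x.2.1⟩, ⟨x.1.2, x.2.2⟩)
  invFun y := ⟨(y.1.1, y.2.1), ⟨y.1.2, y.2.2⟩⟩
  map_add' _ _ := rfl
  map_smul' _ _ := rfl
  left_inv _ := rfl
  right_inv _ := rfl

theorem finrank_subProd {M N : Type*} [AddCommGroup M] [AddCommGroup N] [Module ℝ M] [Module ℝ N]
    [FiniteDimensional ℝ M] [FiniteDimensional ℝ N]
    (p : Submodule ℝ M) (q : Submodule ℝ N) :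
    finrank ℝ (p.prod q) = finrank ℝ p + finrank ℝ q := by
  rw [LinearEquiv.finrank_eq (subProdEquiv p q), Module.finrank_prod]

end Aux

theorem coadjointIsotropy_coprod {L₁ L₂ : Type*} [LieRing L₁] [LieRing L₂]
    [LieAlgebra ℝ L₁] [LieAlgebra ℝ L₂] (ξ₁ : Module.Dual ℝ L₁) (ξ₂ : Module.Dual ℝ L₂) :
    coadjointIsotropy (ξ₁.coprod ξ₂) =
      (coadjointIsotropy ξ₁).prod (coadjointIsotropy ξ₂) := by
  ext ⟨a, b⟩
  constructor
  · intro h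
    constructor
    · intro c
      have h' : ξ₁ ⁅a, c⁆ + ξ₂ ⁅b, (0 : L₂)⁆ = 0 := h (c, 0)
      simpa using h'
    · intro d
      have h' : ξ₁ ⁅a, (0 : L₁)⁆ + ξ₂ ⁅b, d⁆ = 0 := h (0, d)
      simpa using h' 
  · rintro ⟨h1, h2⟩ Y
    have e1 : ξ₁ ⁅a, Y.1⁆ = 0 := h1 Y.1
    have e2 : ξ₂ ⁅b, Y.2⁆ = 0 := h2 Y.2
    show ξ₁ ⁅a, Y.1⁆ + ξ₂ ⁅b, Y.2⁆ = 0
    rw [e1, e2, add_zero]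

theorem finrank_coadjointIsotropy_coprod {L₁ L₂ : Type*} [LieRing L₁] [LieRing L₂]
    [LieAlgebra ℝ L₁] [LieAlgebra ℝ L₂]
    [FiniteDimensional ℝ L₁] [FiniteDimensional ℝ L₂]
    (ξ₁ : Module.Dual ℝ L₁) (ξ₂ : Module.Dual ℝ L₂) :
    finrank ℝ (coadjointIsotropy (ξ₁.coprod ξ₂)) =
      finrank ℝ (coadjointIsotropy ξ₁) + finrank ℝ (coadjointIsotropy ξ₂) := by
  rw [coadjointIsotropy_coprod, finrank_subProd]

theorem coadjointIsotropy_zero {L : Type*} [LieRing L] [LieAlgebra ℝ L] :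
    coadjointIsotropy (0 : Module.Dual ℝ L) = ⊤ := by
  ext x
  simp [coadjointIsotropy]

theorem lieIndex_le {L : Type*} [LieRing L] [LieAlgebra ℝ L] (ξ : Module.Dual ℝ L) :
    lieIndex L ≤ finrank ℝ (coadjointIsotropy ξ) :=
  Nat.sInf_le ⟨ξ, rfl⟩

theorem exists_lieIndex {L : Type*} [LieRing L] [LieAlgebra ℝ L] :
    ∃ ξ : Module.Dual ℝ L, finrank ℝ (coadjointIsotropy ξ) = lieIndex L := by
  have : lieIndex L ∈ Set.range fun ξ : Module.Dual ℝ L => finrank ℝ (coadjointIsotropy ξ) :=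
    Nat.sInf_mem ⟨_, ⟨0, rfl⟩⟩
  exact this

theorem lieIndex_lt_of_not_abelian {L : Type*} [LieRing L] [LieAlgebra ℝ L]
    [FiniteDimensional ℝ L] (h : ¬ IsLieAbelian L) : lieIndex L < finrank ℝ L := by
  have : ∃ a b : L, ⁅a, b⁆ ≠ 0 := by
    by_contra hc
    push_neg at hc
    exact h ⟨hc⟩
  obtain ⟨a, b, hab⟩ := this
  obtain ⟨ξ, hξ⟩ : ∃ ξ : Module.Dual ℝ L, ξ ⁅a, b⁆ ≠ 0 := by
    by_contra hc
    push_neg at hc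
    exact hab ((Module.forall_dual_apply_eq_zero_iff ℝ _).mp hc)
  have hne : coadjointIsotropy ξ ≠ ⊤ := by
    intro htop
    have : a ∈ coadjointIsotropy ξ := htop ▸ Submodule.mem_top
    exact hξ (this b)
  calc lieIndex L ≤ finrank ℝ (coadjointIsotropy ξ) := lieIndex_le ξ
    _ < finrank ℝ L := Submodule.finrank_lt hne

/-- If a product `g₁ × g₂` of finite-dimensional nilpotent Lie algebras is of class `T`,
then at least one of `g₁`, `g₂` is abelian. -/
theorem stmt_5 {L₁ L₂ : Type*} [LieRing L₁] [LieRing L₂]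
    [LieAlgebra ℝ L₁] [LieAlgebra ℝ L₂]
    [FiniteDimensional ℝ L₁] [FiniteDimensional ℝ L₂]
    (hnil₁ : LieRing.IsNilpotent L₁) (hnil₂ : LieRing.IsNilpotent L₂)
    (hT : IsClassT (L₁ × L₂)) :
    IsLieAbelian L₁ ∨ IsLieAbelian L₂ := by
  by_contra hcon
  push_neg at hcon
  obtain ⟨h1, h2⟩ := hcon
  -- pick ξ₁ not vanishing on [L₁, L₁]
  have : ∃ a b : L₁, ⁅a, b⁆ ≠ 0 := by
    by_contra hc
    push_neg at hc
    exact h1 ⟨hc⟩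
  obtain ⟨a, b, hab⟩ := this
  obtain ⟨ξ₁, hξ₁⟩ : ∃ ξ₁ : Module.Dual ℝ L₁, ξ₁ ⁅a, b⁆ ≠ 0 := by
    by_contra hc
    push_neg at hc
    exact hab ((Module.forall_dual_apply_eq_zero_iff ℝ _).mp hc)
  set ξ : Module.Dual ℝ (L₁ × L₂) := ξ₁.coprod 0 with hξdef
  -- ξ does not vanish on the derived series
  have hmem : ((⁅a, b⁆, 0) : L₁ × L₂) ∈ LieAlgebra.derivedSeries ℝ (L₁ × L₂) 1 := by
    have : ((⁅a, b⁆, 0) : L₁ × L₂) = ⁅((a, 0) : L₁ × L₂), ((b, 0) : L₁ × L₂)⁆ := by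
      show (⁅a, b⁆, (0 : L₂)) = (⁅a, b⁆, ⁅(0 : L₂), (0 : L₂)⁆)
      simp
    rw [this]
    exact LieSubmodule.lie_mem_lie (LieSubmodule.mem_top _) (LieSubmodule.mem_top _)
  have hnv : ¬ (∀ x ∈ LieAlgebra.derivedSeries ℝ (L₁ × L₂) 1, ξ x = 0) := by
    intro hall
    have h0 : ξ₁ ⁅a, b⁆ + (0 : Module.Dual ℝ L₂) 0 = 0 := hall _ hmem
    simp at h0
    exact hξ₁ h0
  have hT' := hT ξ hnv
  -- compute finrank of isotropy of ξ
  have hlhs : finrank ℝ (coadjointIsotropy ξ) =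
      finrank ℝ (coadjointIsotropy ξ₁) + finrank ℝ L₂ := by
    rw [hξdef, finrank_coadjointIsotropy_coprod, coadjointIsotropy_zero, finrank_top]
  -- bound lieIndex (L₁ × L₂) ≤ lieIndex L₁ + lieIndex L₂
  obtain ⟨η₁, hη₁⟩ := exists_lieIndex (L := L₁)
  obtain ⟨η₂, hη₂⟩ := exists_lieIndex (L := L₂)
  have hle : lieIndex (L₁ × L₂) ≤ lieIndex L₁ + lieIndex L₂ := by
    calc lieIndex (L₁ × L₂) ≤ finrank ℝ (coadjointIsotropy (η₁.coprod η₂)) :=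
          lieIndex_le _
      _ = lieIndex L₁ + lieIndex L₂ := by
          rw [finrank_coadjointIsotropy_coprod, hη₁, hη₂]
  have hidx1 : lieIndex L₁ ≤ finrank ℝ (coadjointIsotropy ξ₁) := lieIndex_le ξ₁
  have hidx2 : lieIndex L₂ < finrank ℝ L₂ := lieIndex_lt_of_not_abelian h2
  omega
end

section
/- Let G be a first-countable locally compact group, (K_j)_{j≥1} closed subgroups of G converging in the Fell topology (on the space of closed subgroups) to a closed subgroup K, and φ : G → ℂ a continuous function whose restriction to each K_j is a character (continuous homomorphism to the unit circle 𝕋). Then the restriction of φ to K is a character of K. -/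
open Filter Topology TopologicalSpace

def fellTopology (X : Type*) [TopologicalSpace X] : TopologicalSpace (Closeds X) :=
  TopologicalSpace.generateFrom
    {V | ∃ (C : Set X) (𝒮 : Finset (Set X)), IsCompact C ∧ (∀ A ∈ 𝒮, IsOpen A) ∧
      V = {K : Closeds X | (K : Set X) ∩ C = ∅ ∧ ∀ A ∈ 𝒮, ((K : Set X) ∩ A).Nonempty}}

lemma fell_eventually_meets {G : Type*} [Group G] [TopologicalSpace G]
    (K : ℕ → Subgroup G) (hKc : ∀ j, IsClosed (K j : Set G))
    (L : Subgroup G) (hLc : IsClosed (L : Set G))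
    (hconv : @Filter.Tendsto ℕ (Closeds G)
      (fun j => ⟨(K j : Set G), hKc j⟩) atTop
      (@nhds _ (fellTopology G) ⟨(L : Set G), hLc⟩))
    {A : Set G} (hAo : IsOpen A) (hAL : ((L : Set G) ∩ A).Nonempty) :
    ∀ᶠ j in atTop, ((K j : Set G) ∩ A).Nonempty := by
  set V : Set (Closeds G) :=
    {H : Closeds G | (H : Set G) ∩ (∅ : Set G) = ∅ ∧
      ∀ B ∈ ({A} : Finset (Set G)), ((H : Set G) ∩ B).Nonempty}
  have hV : IsOpen[fellTopology G] V :=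
    TopologicalSpace.GenerateOpen.basic _
      ⟨∅, {A}, isCompact_empty, by simpa using hAo, rfl⟩
  have hmem : (⟨(L : Set G), hLc⟩ : Closeds G) ∈ V := by
    constructor
    · simp
    · intro B hB
      simp only [Finset.mem_singleton] at hB
      subst hB
      exact hAL
  have hnh : V ∈ @nhds _ (fellTopology G) ⟨(L : Set G), hLc⟩ := by
    letI := fellTopology G
    exact hV.mem_nhds hmem
  filter_upwards [hconv hnh] with j hj
  exact hj.2 A (Finset.mem_singleton_self A)

lemma exists_approx_seq {G : Type*} [Group G] [TopologicalSpace G]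
    [FirstCountableTopology G]
    (K : ℕ → Subgroup G) (hKc : ∀ j, IsClosed (K j : Set G))
    (L : Subgroup G) (hLc : IsClosed (L : Set G))
    (hconv : @Filter.Tendsto ℕ (Closeds G)
      (fun j => ⟨(K j : Set G), hKc j⟩) atTop
      (@nhds _ (fellTopology G) ⟨(L : Set G), hLc⟩))
    {x : G} (hx : x ∈ L) :
    ∃ u : ℕ → G, (∀ j, u j ∈ K j) ∧ Tendsto u atTop (𝓝 x) := by
  classical
  obtain ⟨U, hU⟩ := (𝓝 x).exists_antitone_basis
  set A : ℕ → Set G := fun n => interior (U n)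
  have hAx : ∀ n, x ∈ A n := fun n =>
    mem_interior_iff_mem_nhds.2 (hU.toHasBasis.mem_of_mem trivial)
  have hev : ∀ n, ∀ᶠ j in atTop, ((K j : Set G) ∩ A n).Nonempty := fun n =>
    fell_eventually_meets K hKc L hLc hconv isOpen_interior ⟨x, hx, hAx n⟩
  choose N hN using fun n => (eventually_atTop.1 (hev n))
  set N' : ℕ → ℕ := fun n => (Finset.range (n + 1)).sup N + n
  have hN'ge : ∀ n, n ≤ N' n := fun n => Nat.le_add_left n _
  have hNN' : ∀ n, N n ≤ N' n := fun n =>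
    le_trans (Finset.le_sup (Finset.self_mem_range_succ n)) (Nat.le_add_right _ _)
  set g : ℕ → ℕ := fun j => Nat.findGreatest (fun n => N' n ≤ j) j
  have hg1 : ∀ n j, N' n ≤ j → n ≤ g j := fun n j h =>
    Nat.le_findGreatest (le_trans (hN'ge n) h) h
  have hg2 : ∀ j, N' 0 ≤ j → N' (g j) ≤ j := fun j h =>
    Nat.findGreatest_spec (P := fun n => N' n ≤ j) (Nat.zero_le j) h
  have hmem : ∀ j, N' 0 ≤ j → ((K j : Set G) ∩ A (g j)).Nonempty := fun j h =>
    hN (g j) j (le_trans (hNN' _) (hg2 j h))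
  refine ⟨fun j => if h : N' 0 ≤ j then (hmem j h).choose else 1, fun j => ?_, ?_⟩
  · by_cases h : N' 0 ≤ j
    · simp only [dif_pos h]
      exact (hmem j h).choose_spec.1
    · simp only [dif_neg h]
      exact one_mem _
  · rw [hU.toHasBasis.tendsto_right_iff]
    intro n _
    filter_upwards [eventually_ge_atTop (N' n), eventually_ge_atTop (N' 0)] with j h1 h0
    simp only [dif_pos h0]
    have h3 : (hmem j h0).choose ∈ A (g j) := (hmem j h0).choose_spec.2
    exact hU.antitone (hg1 n j h1) (interior_subset h3)

/-- Let `G` be a first-countable locally compact group, `(K j)` closed subgroups converging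
in the Fell topology to a closed subgroup `L`, and `φ : G → ℂ` continuous with `φ|_{K j}` a
character of `K j` for every `j`. Then `φ|_L` is a character of `L`. -/
theorem stmt_9 {G : Type*} [Group G] [TopologicalSpace G] [IsTopologicalGroup G]
    [LocallyCompactSpace G] [FirstCountableTopology G]
    (K : ℕ → Subgroup G) (hKc : ∀ j, IsClosed (K j : Set G))
    (L : Subgroup G) (hLc : IsClosed (L : Set G))
    (hconv : @Filter.Tendsto ℕ (Closeds G)
      (fun j => ⟨(K j : Set G), hKc j⟩) atTop
      (@nhds _ (fellTopology G) ⟨(L : Set G), hLc⟩))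
    (φ : G → ℂ) (hφ : Continuous φ)
    (habs : ∀ j, ∀ x ∈ K j, ‖φ x‖ = 1)
    (hmul : ∀ j, ∀ x ∈ K j, ∀ y ∈ K j, φ (x * y) = φ x * φ y) :
    (∀ x ∈ L, ‖φ x‖ = 1) ∧
    (∀ x ∈ L, ∀ y ∈ L, φ (x * y) = φ x * φ y) := by
  constructor
  · intro x hx
    obtain ⟨u, hu, hut⟩ := exists_approx_seq K hKc L hLc hconv hx
    have h1 : Tendsto (fun j => ‖φ (u j)‖) atTop (𝓝 ‖φ x‖) :=
      (continuous_norm.comp hφ).continuousAt.tendsto.comp hut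
    have h2 : Tendsto (fun j => ‖φ (u j)‖) atTop (𝓝 1) := by
      have : (fun j => ‖φ (u j)‖) = fun _ => (1 : ℝ) :=
        funext fun j => habs j (u j) (hu j)
      rw [this]; exact tendsto_const_nhds
    exact tendsto_nhds_unique h1 h2
  · intro x hx y hy
    obtain ⟨u, hu, hut⟩ := exists_approx_seq K hKc L hLc hconv hx
    obtain ⟨v, hv, hvt⟩ := exists_approx_seq K hKc L hLc hconv hy
    have h1 : Tendsto (fun j => φ (u j * v j)) atTop (𝓝 (φ (x * y))) :=
      hφ.continuousAt.tendsto.comp (hut.mul hvt)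
    have h2 : Tendsto (fun j => φ (u j) * φ (v j)) atTop (𝓝 (φ x * φ y)) :=
      (hφ.continuousAt.tendsto.comp hut).mul (hφ.continuousAt.tendsto.comp hvt)
    have heq : (fun j => φ (u j * v j)) = fun j => φ (u j) * φ (v j) :=
      funext fun j => hmul j (u j) (hu j) (v j) (hv j)
    rw [heq] at h1
    exact tendsto_nhds_unique h1 h2
end

section
/- Let (s_n) be a real sequence with s_n → 0, (w_n) a sequence in (0,∞) with w_n → 0, and (θ_n) any sequence of real numbers. Then the set E = {(u₁,u₂) ∈ ℝ² : liminf_{n→∞} (s_n/w_n − u₁ sin θ_n − u₂ cos θ_n) ≤ 0} is either empty or infinite. -/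
open Filter Topology

private lemma mem_E_iff (g : ℕ → ℝ) :
    (Filter.liminf (fun n => ((g n : ℝ) : EReal)) atTop ≤ (0 : EReal)) ↔
      ∀ c : ℝ, 0 < c → {n | g n < c}.Infinite := by
  rw [Filter.liminf_le_iff]
  constructor
  · intro h c hc
    rw [← Nat.frequently_atTop_iff_infinite]
    have := h (c : EReal) (by exact_mod_cast hc)
    exact this.mono (fun n hn => by exact_mod_cast hn)
  · intro h y hy
    obtain ⟨c, hc0, hcy⟩ := EReal.exists_between_coe_real hy
    have hc0' : (0:ℝ) < c := by exact_mod_cast hc0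
    exact ((Nat.frequently_atTop_iff_infinite.2 (h c hc0')).mono
      (fun n hn => lt_trans (by exact_mod_cast hn) hcy))

/-- If `s_n → 0`, `w_n ∈ (0,∞)` with `w_n → 0`, and `(θ_n)` is any sequence of reals, then
`E = {(u₁,u₂) : liminf (s_n/w_n − u₁ sin θ_n − u₂ cos θ_n) ≤ 0}` is empty or infinite. -/
theorem stmt_10 (s w θ : ℕ → ℝ)
    (hs : Tendsto s atTop (nhds (0 : ℝ)))
    (hwpos : ∀ n, 0 < w n)
    (hw : Tendsto w atTop (nhds (0 : ℝ))) :
    {u : ℝ × ℝ | Filter.liminf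
        (fun n => ((s n / w n - u.1 * Real.sin (θ n) - u.2 * Real.cos (θ n) : ℝ) : EReal))
        atTop ≤ (0 : EReal)} = ∅ ∨
    {u : ℝ × ℝ | Filter.liminf
        (fun n => ((s n / w n - u.1 * Real.sin (θ n) - u.2 * Real.cos (θ n) : ℝ) : EReal))
        atTop ≤ (0 : EReal)}.Infinite := by
  set E := {u : ℝ × ℝ | Filter.liminf
        (fun n => ((s n / w n - u.1 * Real.sin (θ n) - u.2 * Real.cos (θ n) : ℝ) : EReal))
        atTop ≤ (0 : EReal)} with hE
  rcases Set.eq_empty_or_nonempty E with h | ⟨u, hu⟩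
  · exact Or.inl h
  right
  have hu' : ∀ c : ℝ, 0 < c →
      {n | s n / w n - u.1 * Real.sin (θ n) - u.2 * Real.cos (θ n) < c}.Infinite :=
    (mem_E_iff _).1 hu
  -- pigeonhole on sign of sin θ n
  have key : ∃ ε : ℝ, ε ≠ 0 ∧ ∀ c : ℝ, 0 < c →
      {n | s n / w n - u.1 * Real.sin (θ n) - u.2 * Real.cos (θ n) < c
        ∧ 0 ≤ ε * Real.sin (θ n)}.Infinite := by
    by_cases H : ∀ c : ℝ, 0 < c →
        {n | s n / w n - u.1 * Real.sin (θ n) - u.2 * Real.cos (θ n) < c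
          ∧ 0 ≤ Real.sin (θ n)}.Infinite
    · exact ⟨1, one_ne_zero, fun c hc => (H c hc).mono (fun n hn => ⟨hn.1, by simpa using hn.2⟩)⟩
    · push_neg at H
      obtain ⟨c₁, hc₁, hfin⟩ := H
      refine ⟨-1, by norm_num, fun c hc => ?_⟩
      have hmin : (0:ℝ) < min c c₁ := lt_min hc hc₁
      have hinf := hu' _ hmin
      have hsub : {n | s n / w n - u.1 * Real.sin (θ n) - u.2 * Real.cos (θ n) < min c c₁} ⊆
          {n | s n / w n - u.1 * Real.sin (θ n) - u.2 * Real.cos (θ n) < c₁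
            ∧ 0 ≤ Real.sin (θ n)} ∪
          {n | s n / w n - u.1 * Real.sin (θ n) - u.2 * Real.cos (θ n) < c
            ∧ 0 ≤ (-1) * Real.sin (θ n)} := by
        intro n hn
        rcases le_or_gt 0 (Real.sin (θ n)) with h' | h'
        · exact Or.inl ⟨lt_of_lt_of_le hn (min_le_right _ _), h'⟩
        · exact Or.inr ⟨lt_of_lt_of_le hn (min_le_left _ _), by nlinarith⟩
      have := hinf.mono hsub
      rcases (Set.infinite_union.mp this) with h' | h'
      · exact absurd h' hfin.not_infinite
      · exact h'
  obtain ⟨ε, hε0, hεinf⟩ := key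
  apply Set.infinite_of_injective_forall_mem
    (f := fun k : ℕ => ((u.1 + ε * k, u.2) : ℝ × ℝ))
  · intro a b hab
    have : ε * a = ε * b := by
      have := congrArg Prod.fst hab
      simpa using this
    exact_mod_cast mul_left_cancel₀ hε0 this
  · intro k
    rw [hE, Set.mem_setOf_eq]
    apply (mem_E_iff _).2
    intro c hc
    refine (hεinf c hc).mono (fun n hn => ?_)
    simp only [Set.mem_setOf_eq] at hn ⊢
    have : 0 ≤ (k : ℝ) * (ε * Real.sin (θ n)) :=
      mul_nonneg (Nat.cast_nonneg k) hn.2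
    calc s n / w n - (u.1 + ε * k) * Real.sin (θ n) - u.2 * Real.cos (θ n)
        = (s n / w n - u.1 * Real.sin (θ n) - u.2 * Real.cos (θ n))
          - (k : ℝ) * (ε * Real.sin (θ n)) := by ring
      _ ≤ s n / w n - u.1 * Real.sin (θ n) - u.2 * Real.cos (θ n) := by linarith
      _ < c := hn.1
end

section
/- Let g be a nilpotent Lie algebra, X ∈ g, and a ⊆ g an abelian ideal of codimension 1 with X ∉ a. Suppose the nilpotent operator D = (ad X)|_a : a → a has range of codimension 1 in a. Then g is isomorphic to the filiform Lie algebra f_m of dimension m = dim g, i.e. the Lie algebra with basis X₁,…,X_m satisfying [X_m, X_j] = X_{j−1} for j = 2,…,m−1 and all other brackets of basis elements zero. -/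
open Module LinearMap

lemma aux_ker_mul {V : Type*} [AddCommGroup V] [Module ℝ V] [FiniteDimensional ℝ V]
    (f g : Module.End ℝ V) :
    finrank ℝ (ker (f * g)) ≤ finrank ℝ (ker f) + finrank ℝ (ker g) := by
  set K := ker (f * g)
  have hmaps : ∀ x ∈ K, g x ∈ ker f := by
    intro x hx
    simpa [K, Module.End.mul_apply] using hx
  set φ : K →ₗ[ℝ] ker f := g.restrict hmaps with hφ
  have h1 : finrank ℝ (LinearMap.range φ) + finrank ℝ (ker φ) = finrank ℝ K :=
    finrank_range_add_finrank_ker φ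
  have h2 : finrank ℝ (LinearMap.range φ) ≤ finrank ℝ (ker f) :=
    (LinearMap.range φ).finrank_le
  have h3 : finrank ℝ (ker φ) ≤ finrank ℝ (ker g) := by
    have hker : ∀ x : ker φ, ((x : K) : V) ∈ ker g := by
      intro x
      have hx : φ (x : K) = 0 := x.2
      have h' : (φ (x : K) : V) = 0 := congrArg Subtype.val hx
      rw [mem_ker]
      exact h'
    let ψ : ker φ →ₗ[ℝ] ker g :=
      { toFun := fun x => ⟨((x : K) : V), hker x⟩
        map_add' := fun x y => rfl
        map_smul' := fun r x => rfl }
    have hinj : Function.Injective ψ := by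
      intro x y hxy
      have h' : ((x : K) : V) = ((y : K) : V) := congrArg (fun z : ker g => (z : V)) hxy
      exact Subtype.ext (Subtype.ext h')
    exact LinearMap.finrank_le_finrank_of_injective hinj
  omega

lemma aux_ker_pow {V : Type*} [AddCommGroup V] [Module ℝ V] [FiniteDimensional ℝ V]
    (f : Module.End ℝ V) (k : ℕ) :
    finrank ℝ (ker (f ^ k)) ≤ k * finrank ℝ (ker f) := by
  induction k with
  | zero => simp [Module.End.one_eq_id]
  | succ k ih =>
      have hp : f ^ (k + 1) = f * f ^ k := by rw [pow_succ']
      rw [hp]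
      calc finrank ℝ (ker (f * f ^ k)) ≤ finrank ℝ (ker f) + finrank ℝ (ker (f ^ k)) :=
            aux_ker_mul f (f ^ k)
        _ ≤ finrank ℝ (ker f) + k * finrank ℝ (ker f) := by omega
        _ = (k + 1) * finrank ℝ (ker f) := by ring

lemma aux_li {V : Type*} [AddCommGroup V] [Module ℝ V]
    (f : Module.End ℝ V) (n : ℕ) (hn : 1 ≤ n) (hfn : f ^ n = 0) (v : V)
    (hv : (f ^ (n - 1)) v ≠ 0) :
    LinearIndependent ℝ (fun i : Fin n => (f ^ (i : ℕ)) v) := by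
  rw [Fintype.linearIndependent_iff]
  intro c hc
  suffices h : ∀ k, ∀ hk : k < n, c ⟨k, hk⟩ = 0 by
    intro i; exact h i.val i.isLt
  intro k
  induction k using Nat.strong_induction_on with
  | _ k ih =>
    intro hk
    have h2 := congrArg (f ^ (n - 1 - k)) hc
    rw [map_sum, map_zero] at h2
    have h3 : ∀ i : Fin n, (f ^ (n - 1 - k)) (c i • (f ^ (i : ℕ)) v)
        = c i • (f ^ (n - 1 - k + (i : ℕ))) v := by
      intro i
      rw [map_smul, ← Module.End.mul_apply, ← pow_add]
    simp only [h3] at h2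
    have h4 : ∑ i : Fin n, c i • (f ^ (n - 1 - k + (i : ℕ))) v
        = c ⟨k, hk⟩ • (f ^ (n - 1)) v := by
      rw [Finset.sum_eq_single (⟨k, hk⟩ : Fin n)]
      · have harith : n - 1 - k + ((⟨k, hk⟩ : Fin n) : ℕ) = n - 1 := by
          simp only [Fin.val_mk]; omega
        rw [harith]
      · intro i _ hne
        rcases lt_or_gt_of_ne (fun h => hne (Fin.ext h) : (i : ℕ) ≠ k) with h | h
        · rw [ih i.val h i.isLt, zero_smul]
        · have hz : (f ^ (n - 1 - k + (i : ℕ))) = 0 :=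
            pow_eq_zero_of_le (by omega) hfn
          rw [hz]; simp
      · intro h; exact absurd (Finset.mem_univ _) h
    rw [h4] at h2
    rcases smul_eq_zero.mp h2 with h | h
    · exact h
    · exact absurd h hv

/-- Let `g` be a nilpotent Lie algebra, `a ⊆ g` an abelian ideal of codimension 1 and
`X ∈ g \ a`, such that the range of the nilpotent operator `D = (ad X)|_a : a → a` has
codimension 1 in `a`. Then `g` is isomorphic to the filiform Lie algebra `f_m`,
`m = dim g`, i.e. `g` has a basis `c 0, …, c (m-1)` (corresponding to `X₁, …, X_m`) with
`[X_m, X_j] = X_{j-1}` for `j = 2, …, m-1` and all other brackets of basis elements zero. -/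

theorem stmt_11 {L : Type*} [LieRing L] [LieAlgebra ℝ L] [FiniteDimensional ℝ L]
    (hnil : LieRing.IsNilpotent L)
    (a : LieIdeal ℝ L)
    (habel : ∀ x ∈ a, ∀ y ∈ a, ⁅x, y⁆ = (0 : L))
    (hcodim : finrank ℝ L = finrank ℝ a.toSubmodule + 1)
    (X : L) (hX : X ∉ a)
    (hrange : finrank ℝ (Submodule.map (LieAlgebra.ad ℝ L X) a.toSubmodule) + 1 =
      finrank ℝ a.toSubmodule)
    (m : ℕ) (hm : finrank ℝ L = m) (hm3 : 3 ≤ m) :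
    ∃ c : Basis (Fin m) ℝ L,
      (⁅c ⟨m - 1, by omega⟩, c ⟨0, by omega⟩⁆ = 0) ∧
      (∀ j : Fin m, 1 ≤ j.val → j.val ≤ m - 2 →
        ⁅c ⟨m - 1, by omega⟩, c j⁆ = c ⟨j.val - 1, by omega⟩) ∧
      (∀ i j : Fin m, i.val ≤ m - 2 → j.val ≤ m - 2 → ⁅c i, c j⁆ = 0) := by
  classical
  haveI := hnil
  set n := m - 1 with hn
  have hn1 : 1 ≤ n := by omega
  have hn2 : 2 ≤ n := by omega
  set A := a.toSubmodule with hA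
  have hAfin : finrank ℝ A = n := by omega
  have hmem : ∀ x ∈ A, (LieAlgebra.ad ℝ L X) x ∈ A := by
    intro x hx
    have : ⁅X, x⁆ ∈ a := a.lie_mem ((LieSubmodule.mem_toSubmodule (N := a)).mp hx)
    simpa [LieAlgebra.ad_apply, LieSubmodule.mem_toSubmodule, hA] using this
  set D : Module.End ℝ A := (LieAlgebra.ad ℝ L X).restrict hmem with hD
  have hDcoe : ∀ w : A, ((D w : L)) = ⁅X, (w : L)⁆ := fun w => rfl
  -- nilpotency
  have hadnil : IsNilpotent (LieAlgebra.ad ℝ L X) :=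
    LieModule.isNilpotent_toEnd_of_isNilpotent ℝ L L X
  have hDnil : IsNilpotent D := by
    obtain ⟨k, hk⟩ := hadnil
    refine ⟨k, ?_⟩
    ext w
    have h1 : ((D ^ k) w : L) = ((LieAlgebra.ad ℝ L X ^ k) (w : L)) := by
      rw [hD, Module.End.pow_restrict]
      rfl
    rw [hk] at h1
    rw [h1]
    rfl
  have hDn : D ^ n = 0 := by
    obtain ⟨k, hk⟩ := hDnil
    have h1 : ker (D ^ k) = ⊤ := by rw [hk]; exact LinearMap.ker_zero
    have h2 := Module.End.ker_pow_le_ker_pow_finrank D k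
    rw [hAfin, h1] at h2
    exact LinearMap.ker_eq_top.mp (top_le_iff.mp h2)
  -- rank
  have himg : Submodule.map A.subtype (LinearMap.range D) =
      Submodule.map (LieAlgebra.ad ℝ L X) A := by
    ext x
    simp only [Submodule.mem_map, LinearMap.mem_range]
    constructor
    · rintro ⟨w, ⟨u, rfl⟩, rfl⟩
      exact ⟨(u : L), u.2, rfl⟩
    · rintro ⟨y, hy, rfl⟩
      exact ⟨D ⟨y, hy⟩, ⟨⟨y, hy⟩, rfl⟩, rfl⟩
  have hrk : finrank ℝ (LinearMap.range D) + 1 = n := by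
    have h1 := Submodule.finrank_map_subtype_eq A (LinearMap.range D)
    rw [himg] at h1
    omega
  have hker1 : finrank ℝ (ker D) = 1 := by
    have h1 := LinearMap.finrank_range_add_finrank_ker D
    rw [hAfin] at h1
    omega
  have hpow_ne : D ^ (n - 1) ≠ 0 := by
    intro h0
    have h1 := aux_ker_pow D (n - 1)
    rw [hker1, mul_one, h0, LinearMap.ker_zero, finrank_top, hAfin] at h1
    omega
  obtain ⟨v, hv⟩ : ∃ v : A, (D ^ (n - 1)) v ≠ 0 := by
    by_contra h
    push_neg at h
    exact hpow_ne (LinearMap.ext fun w => h w)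
  have hli := aux_li D n hn1 hDn v hv
  -- the family
  set g : Fin n → L := fun i => ((D ^ (n - 1 - (i : ℕ))) v : L) with hg
  have hgA : ∀ i, g i ∈ A := fun i => ((D ^ (n - 1 - (i : ℕ))) v).2
  have hli2 : LinearIndependent ℝ g := by
    have h1 : LinearIndependent ℝ ((fun i : Fin n => (D ^ (i : ℕ)) v) ∘ Fin.rev) :=
      hli.comp Fin.rev Fin.rev_injective
    have h2 : LinearIndependent ℝ
        (A.subtype ∘ ((fun i : Fin n => (D ^ (i : ℕ)) v) ∘ Fin.rev)) :=
      h1.map' A.subtype (Submodule.ker_subtype A)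
    have h3 : g = A.subtype ∘ ((fun i : Fin n => (D ^ (i : ℕ)) v) ∘ Fin.rev) := by
      funext i
      have hval : ((Fin.rev i : Fin n) : ℕ) = n - 1 - (i : ℕ) := by
        rw [Fin.val_rev]; omega
      simp only [hg, Function.comp_apply, hval]
      rfl
    rw [h3]; exact h2
  have hXA : X ∉ Submodule.span ℝ (Set.range g) := by
    intro hXs
    apply hX
    have hle : Submodule.span ℝ (Set.range g) ≤ A :=
      Submodule.span_le.mpr (by rintro _ ⟨i, rfl⟩; exact hgA i)
    exact (LieSubmodule.mem_toSubmodule (N := a)).mp (hle hXs)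
  have hsnoc : LinearIndependent ℝ (Fin.snoc g X : Fin (n + 1) → L) :=
    linearIndependent_fin_snoc.mpr ⟨hli2, hXA⟩
  have hmn : m = n + 1 := by omega
  set f : Fin m → L := fun j => if h : (j : ℕ) < n then g ⟨j, h⟩ else X with hf
  have hfeq : ∀ j : Fin m, f j = (Fin.snoc g X : Fin (n + 1) → L) (Fin.cast hmn j) := by
    intro j
    by_cases h : (j : ℕ) < n
    · have h1 : (Fin.cast hmn j) = Fin.castSucc ⟨(j : ℕ), h⟩ := by
        ext; simp
      rw [h1, Fin.snoc_castSucc]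
      simp only [hf]
      rw [dif_pos h]
    · have hj : (j : ℕ) = n := by omega
      have h1 : (Fin.cast hmn j) = Fin.last n := by
        ext; simp [hj]
      rw [h1, Fin.snoc_last]
      simp only [hf]
      rw [dif_neg h]
  have hfli : LinearIndependent ℝ f := by
    have h1 : LinearIndependent ℝ ((Fin.snoc g X : Fin (n + 1) → L) ∘ (Fin.cast hmn)) :=
      hsnoc.comp (Fin.cast hmn) (Fin.cast_injective hmn)
    have h2 : f = (Fin.snoc g X : Fin (n + 1) → L) ∘ (Fin.cast hmn) := funext hfeq
    rw [h2]; exact h1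
  haveI : Nonempty (Fin m) := ⟨⟨0, by omega⟩⟩
  have hcard : Fintype.card (Fin m) = finrank ℝ L := by simp [hm]
  set c := basisOfLinearIndependentOfCardEqFinrank hfli hcard with hcdef
  have hc : ⇑c = f := coe_basisOfLinearIndependentOfCardEqFinrank _ _
  -- basic values
  have hclast : c ⟨m - 1, by omega⟩ = X := by
    rw [hc]
    simp only [hf]
    rw [dif_neg (by omega)]
  have hcval : ∀ j : Fin m, (j : ℕ) < n → c j = ((D ^ (n - 1 - (j : ℕ))) v : L) := by
    intro j hj
    rw [hc]
    simp only [hf]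
    rw [dif_pos hj]
  have hcmem : ∀ j : Fin m, (j : ℕ) < n → c j ∈ a := by
    intro j hj
    rw [hcval j hj]
    exact (LieSubmodule.mem_toSubmodule (N := a)).mp ((D ^ (n - 1 - (j : ℕ))) v).2
  refine ⟨c, ?_, ?_, ?_⟩
  · -- ⁅X, c 0⁆ = 0
    rw [hclast, hcval ⟨0, by omega⟩ (by show 0 < n; omega)]
    have h0 : ((⟨0, by omega⟩ : Fin m) : ℕ) = 0 := rfl
    rw [h0, Nat.sub_zero, ← hDcoe]
    have hnn : n - 1 + 1 = n := by omega
    have h1 : D ((D ^ (n - 1)) v) = (D ^ n) v := by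
      conv_rhs => rw [← hnn]
      rw [pow_succ']
      rfl
    rw [h1, hDn]
    simp
  · -- middle brackets
    intro j hj1 hj2
    have hjn : (j : ℕ) < n := by omega
    have hjn' : ((j : ℕ) - 1) < n := by omega
    rw [hclast, hcval j hjn, ← hDcoe]
    rw [hcval ⟨(j : ℕ) - 1, by omega⟩ (by simpa using hjn')]
    have hnn2 : n - 1 - ((j : ℕ) - 1) = n - 1 - (j : ℕ) + 1 := by omega
    have h1 : D ((D ^ (n - 1 - (j : ℕ))) v) = (D ^ (n - 1 - ((j : ℕ) - 1))) v := by
      rw [hnn2, pow_succ']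
      rfl
    have h2 : ((⟨(j : ℕ) - 1, by omega⟩ : Fin m) : ℕ) = (j : ℕ) - 1 := rfl
    rw [h2, h1]
  · -- abelian part
    intro i j hi hj
    exact habel _ (hcmem i (by omega)) _ (hcmem j (by omega))
end

section
/- Let g = h₃ × h₅ be the direct product of the 3-dimensional and 5-dimensional Heisenberg Lie algebras. Then g is a 2-step nilpotent Lie algebra of dimension 8 which admits both a coadjoint isotropy subalgebra of codimension 2 and one of codimension 4; equivalently, there exist ξ, η ∈ g* not vanishing on [g,g] with dim g(ξ) = 6 and dim g(η) = 4. In particular g is not of class T. -/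
open Module

lemma mem_coadjointIsotropy {L : Type*} [LieRing L] [LieAlgebra ℝ L]
    {ξ : Module.Dual ℝ L} {x : L} :
    x ∈ coadjointIsotropy ξ ↔ ∀ Y : L, ξ ⁅x, Y⁆ = 0 := Iff.rfl

/-- Structure coefficient on `b 2` for `h₃ × h₅`. -/
noncomputable def fcAux : ℕ → ℕ → ℝ := fun i j =>
  if i = 0 ∧ j = 1 then 1 else if i = 1 ∧ j = 0 then -1 else 0

/-- Structure coefficient on `b 7` for `h₃ × h₅`. -/
noncomputable def gcAux : ℕ → ℕ → ℝ := fun i j =>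
  if (i = 3 ∧ j = 5) ∨ (i = 4 ∧ j = 6) then 1
  else if (i = 5 ∧ j = 3) ∨ (i = 6 ∧ j = 4) then -1 else 0

/-- The kernel of the map picking out `k` coordinates w.r.t. a basis has corank `k`. -/
lemma auxKerCoord {L : Type*} [AddCommGroup L] [Module ℝ L] [FiniteDimensional ℝ L]
    {n k : ℕ} (b : Basis (Fin n) ℝ L) (e : Fin k → Fin n) (he : Function.Injective e) :
    finrank ℝ (LinearMap.ker (LinearMap.pi fun i : Fin k => b.coord (e i))) + k = n := by
  set φ := LinearMap.pi (R := ℝ) fun i : Fin k => b.coord (e i) with hφ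
  have hsurj : Function.Surjective φ := by
    intro v
    refine ⟨∑ i, v i • b (e i), ?_⟩
    funext j
    simp [hφ, LinearMap.pi_apply, Basis.coord_apply, map_sum, map_smul,
      Basis.repr_self_apply, Finsupp.single_apply, he.eq_iff, Finset.sum_ite_eq', mul_ite]
  have hL : finrank ℝ L = n := by
    rw [finrank_eq_card_basis b, Fintype.card_fin]
  have h1 := LinearMap.finrank_range_add_finrank_ker φ
  rw [LinearMap.range_eq_top.mpr hsurj, finrank_top, hL] at h1
  have h2 : finrank ℝ (Fin k → ℝ) = k := by simp
  omega

/-- The direct product `h₃ × h₅` of the 3- and 5-dimensional Heisenberg Lie algebras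
(basis `b 0,…,b 7` with `⁅b 0, b 1⁆ = b 2`, `⁅b 3, b 5⁆ = b 7`, `⁅b 4, b 6⁆ = b 7`, all other
brackets of basis elements zero) is a 2-step nilpotent Lie algebra of dimension 8 admitting
coadjoint isotropy subalgebras of codimension 2 and of codimension 4 at functionals not
vanishing on `[g,g]`; in particular it is not of class `T`. -/
theorem stmt_15 {L : Type*} [LieRing L] [LieAlgebra ℝ L] [FiniteDimensional ℝ L]
    (b : Basis (Fin 8) ℝ L)
    (h1 : ⁅b 0, b 1⁆ = b 2) (h2 : ⁅b 3, b 5⁆ = b 7) (h3 : ⁅b 4, b 6⁆ = b 7)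
    (h0 : ∀ i j : Fin 8, i < j → (i, j) ≠ (0, 1) → (i, j) ≠ (3, 5) → (i, j) ≠ (4, 6) →
      ⁅b i, b j⁆ = 0) :
    (∀ x y z : L, ⁅x, ⁅y, z⁆⁆ = 0) ∧
    finrank ℝ L = 8 ∧
    (∃ ξ : Module.Dual ℝ L,
      ¬ (∀ x ∈ LieAlgebra.derivedSeries ℝ L 1, ξ x = 0) ∧
        finrank ℝ (coadjointIsotropy ξ) = 6) ∧
    (∃ η : Module.Dual ℝ L,
      ¬ (∀ x ∈ LieAlgebra.derivedSeries ℝ L 1, η x = 0) ∧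
        finrank ℝ (coadjointIsotropy η) = 4) ∧
    ¬ IsClassT L := by
  -- the multiplication table for basis vectors
  have tbl : ∀ i j : Fin 8, ⁅b i, b j⁆ = fcAux i.val j.val • b 2 + gcAux i.val j.val • b 7 := by
    intro i j
    fin_cases i <;> fin_cases j <;>
      norm_num [fcAux, gcAux] <;>
      first
        | exact h1 | exact h2 | exact h3
        | exact h0 _ _ (by decide) (by decide) (by decide) (by decide)
        | (rw [← lie_skew, neg_eq_zero];
           exact h0 _ _ (by decide) (by decide) (by decide) (by decide))
        | (rw [← lie_skew]; exact neg_inj.mpr h1)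
        | (rw [← lie_skew]; exact neg_inj.mpr h2)
        | (rw [← lie_skew]; exact neg_inj.mpr h3)
  -- bilinear expansion of the bracket
  have sum_lie' : ∀ (s : Finset (Fin 8)) (f : Fin 8 → L) (y : L),
      ⁅∑ i ∈ s, f i, y⁆ = ∑ i ∈ s, ⁅f i, y⁆ := by
    intro s f y
    induction s using Finset.cons_induction with
    | empty => simp
    | cons i s hi ih => rw [Finset.sum_cons, Finset.sum_cons, add_lie, ih]
  have lie_sum' : ∀ (s : Finset (Fin 8)) (x : L) (f : Fin 8 → L),
      ⁅x, ∑ i ∈ s, f i⁆ = ∑ i ∈ s, ⁅x, f i⁆ := by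
    intro s x f
    induction s using Finset.cons_induction with
    | empty => simp
    | cons i s hi ih => rw [Finset.sum_cons, Finset.sum_cons, lie_add, ih]
  have expand : ∀ x y : L, ⁅x, y⁆ =
      ∑ i : Fin 8, ∑ j : Fin 8, (b.repr x i * b.repr y j) • ⁅b i, b j⁆ := by
    intro x y
    conv_lhs => rw [← b.sum_repr x, ← b.sum_repr y]
    rw [sum_lie']
    refine Finset.sum_congr rfl fun i _ => ?_
    rw [smul_lie, lie_sum', Finset.smul_sum]
    refine Finset.sum_congr rfl fun j _ => ?_
    rw [lie_smul, smul_smul]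
  have bform : ∀ x y : L, ⁅x, y⁆ =
      (b.repr x 0 * b.repr y 1 - b.repr x 1 * b.repr y 0) • b 2 +
      (b.repr x 3 * b.repr y 5 - b.repr x 5 * b.repr y 3 +
       b.repr x 4 * b.repr y 6 - b.repr x 6 * b.repr y 4) • b 7 := by
    intro x y
    rw [expand]
    simp only [tbl, Fin.sum_univ_eight]
    simp only [show ((0:Fin 8):ℕ) = 0 from rfl, show ((1:Fin 8):ℕ) = 1 from rfl,
      show ((2:Fin 8):ℕ) = 2 from rfl, show ((3:Fin 8):ℕ) = 3 from rfl,
      show ((4:Fin 8):ℕ) = 4 from rfl, show ((5:Fin 8):ℕ) = 5 from rfl,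
      show ((6:Fin 8):ℕ) = 6 from rfl, show ((7:Fin 8):ℕ) = 7 from rfl]
    norm_num [fcAux, gcAux]
    module
  -- 2-step nilpotency
  have c2 : ∀ x : L, ⁅x, b 2⁆ = 0 := by
    intro x
    rw [bform]
    simp [Basis.repr_self_apply]
  have c7 : ∀ x : L, ⁅x, b 7⁆ = 0 := by
    intro x
    rw [bform]
    simp [Basis.repr_self_apply]
  have nil : ∀ x y z : L, ⁅x, ⁅y, z⁆⁆ = 0 := by
    intro x y z
    rw [bform y z, lie_add, lie_smul, lie_smul, c2, c7]
    simp
  -- dimension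
  have dim8 : finrank ℝ L = 8 := by
    rw [finrank_eq_card_basis b, Fintype.card_fin]
  -- brackets lie in the derived series
  have hd : ∀ u v : L, ⁅u, v⁆ ∈ LieAlgebra.derivedSeries ℝ L 1 := by
    intro u v
    rw [LieAlgebra.derivedSeries_def, LieAlgebra.derivedSeriesOfIdeal_succ,
      LieAlgebra.derivedSeriesOfIdeal_zero]
    exact LieSubmodule.lie_mem_lie (LieSubmodule.mem_top _) (LieSubmodule.mem_top _)
  -- evaluation of the two coordinate functionals on brackets
  have ev2 : ∀ x y : L, b.coord 2 ⁅x, y⁆ =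
      b.repr x 0 * b.repr y 1 - b.repr x 1 * b.repr y 0 := by
    intro x y
    rw [bform]
    simp [Basis.coord_apply, Basis.repr_self_apply]
  have ev7 : ∀ x y : L, b.coord 7 ⁅x, y⁆ =
      b.repr x 3 * b.repr y 5 - b.repr x 5 * b.repr y 3 +
      b.repr x 4 * b.repr y 6 - b.repr x 6 * b.repr y 4 := by
    intro x y
    rw [bform]
    simp [Basis.coord_apply, Basis.repr_self_apply]
  -- nonvanishing on the derived series
  have hξ : ¬ (∀ x ∈ LieAlgebra.derivedSeries ℝ L 1, b.coord 2 x = 0) := by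
    intro hcon
    have h := hcon (b 2) (h1 ▸ hd (b 0) (b 1))
    simp [Basis.coord_apply, Basis.repr_self_apply] at h
  have hη : ¬ (∀ x ∈ LieAlgebra.derivedSeries ℝ L 1, b.coord 7 x = 0) := by
    intro hcon
    have h := hcon (b 7) (h2 ▸ hd (b 3) (b 5))
    simp [Basis.coord_apply, Basis.repr_self_apply] at h
  -- the isotropy subalgebras as kernels of coordinate maps
  have hker2 : coadjointIsotropy (b.coord 2) =
      LinearMap.ker (LinearMap.pi fun i : Fin 2 => b.coord (![0, 1] i)) := by
    ext x
    rw [mem_coadjointIsotropy, LinearMap.mem_ker]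
    constructor
    · intro hx
      funext j
      fin_cases j
      · have h := hx (b 1)
        rw [ev2] at h
        simpa [Basis.repr_self_apply, Basis.coord_apply] using h
      · have h := hx (b 0)
        rw [ev2] at h
        simp [Basis.repr_self_apply] at h
        simpa [Basis.coord_apply, Basis.repr_self_apply]
    · intro hx y
      have h0' : b.repr x 0 = 0 := by
        have := congrFun hx 0
        simpa [Basis.coord_apply] using this
      have h1' : b.repr x 1 = 0 := by
        have := congrFun hx 1
        simpa [Basis.coord_apply] using this
      rw [ev2, h0', h1']
      ring
  have hker7 : coadjointIsotropy (b.coord 7) =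
      LinearMap.ker (LinearMap.pi fun i : Fin 4 => b.coord (![3, 4, 5, 6] i)) := by
    ext x
    rw [mem_coadjointIsotropy, LinearMap.mem_ker]
    constructor
    · intro hx
      funext j
      fin_cases j
      · have h := hx (b 5)
        rw [ev7] at h
        simpa [Basis.repr_self_apply, Basis.coord_apply] using h
      · have h := hx (b 6)
        rw [ev7] at h
        simpa [Basis.repr_self_apply, Basis.coord_apply] using h
      · have h := hx (b 3)
        rw [ev7] at h
        simp [Basis.repr_self_apply] at h
        simpa [Basis.coord_apply, Basis.repr_self_apply]
      · have h := hx (b 4)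
        rw [ev7] at h
        simp [Basis.repr_self_apply] at h
        simpa [Basis.coord_apply, Basis.repr_self_apply]
    · intro hx y
      have h3' : b.repr x 3 = 0 := by
        have := congrFun hx 0
        simpa [Basis.coord_apply] using this
      have h4' : b.repr x 4 = 0 := by
        have := congrFun hx 1
        simpa [Basis.coord_apply] using this
      have h5' : b.repr x 5 = 0 := by
        have := congrFun hx 2
        simpa [Basis.coord_apply] using this
      have h6' : b.repr x 6 = 0 := by
        have := congrFun hx 3
        simpa [Basis.coord_apply] using this
      rw [ev7, h3', h4', h5', h6']
      ring
  -- dimensions of the isotropy subalgebras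
  have d6 : finrank ℝ (coadjointIsotropy (b.coord 2)) = 6 := by
    rw [hker2]
    exact Nat.add_right_cancel ((auxKerCoord b ![0, 1] (by decide)).trans (by norm_num : (8:ℕ) = 6 + 2))
  have d4 : finrank ℝ (coadjointIsotropy (b.coord 7)) = 4 := by
    rw [hker7]
    exact Nat.add_right_cancel ((auxKerCoord b ![3, 4, 5, 6] (by decide)).trans (by norm_num : (8:ℕ) = 4 + 4))
  refine ⟨nil, dim8, ⟨b.coord 2, hξ, d6⟩, ⟨b.coord 7, hη, d4⟩, ?_⟩
  intro hT
  have a1 := hT (b.coord 2) hξ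
  have a2 := hT (b.coord 7) hη
  rw [d6] at a1
  rw [d4] at a2
  omega
end

section
/- For the filiform Lie algebra f_n (n ≥ 3), with basis X₁,…,X_n and brackets [X_n, X_j] = X_{j−1} for 2 ≤ j ≤ n−1, one has ind f_n = n − 2; that is, the minimum over ξ ∈ f_n* of dim{X : ξ([X, f_n]) = 0} equals n − 2. -/
open Module

/-- For the filiform Lie algebra `f_n` (`n ≥ 3`; basis `X₁,…,X_n` with `[X_n,X_j] = X_{j−1}`
for `j = 1,…,n−1`, `X₀ := 0`, and all other brackets of basis elements zero; here `b i`
corresponds to `X_{i+1}`), one has `ind f_n = n − 2`. -/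
theorem stmt_18 {L : Type*} [LieRing L] [LieAlgebra ℝ L] [FiniteDimensional ℝ L]
    (n : ℕ) (hn : 3 ≤ n) (b : Basis (Fin n) ℝ L)
    (htop0 : ⁅b ⟨n - 1, by omega⟩, b ⟨0, by omega⟩⁆ = 0)
    (htop : ∀ j : Fin n, 1 ≤ j.val → j.val ≤ n - 2 →
      ⁅b ⟨n - 1, by omega⟩, b j⁆ = b ⟨j.val - 1, by omega⟩)
    (h0 : ∀ i j : Fin n, i.val ≤ n - 2 → j.val ≤ n - 2 → ⁅b i, b j⁆ = 0) :
    lieIndex L = n - 2 := by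
  have hnN : n - 1 < n := by omega
  have h0n : (0 : ℕ) < n := by omega
  have h1n : (1 : ℕ) < n := by omega
  set N : Fin n := ⟨n - 1, hnN⟩ with hN
  set e : L := b N with he
  have hmem : ∀ (ξ : Module.Dual ℝ L) (X : L),
      X ∈ coadjointIsotropy ξ ↔ ∀ Y : L, ξ ⁅X, Y⁆ = 0 := fun ξ X => Iff.rfl
  have hcoord : ∀ i j : Fin n, b.coord i (b j) = if j = i then 1 else 0 := by
    intro i j
    simp [Basis.coord_apply, Finsupp.single_apply]
  have hfr : finrank ℝ L = n := by
    rw [Module.finrank_eq_card_basis b, Fintype.card_fin]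
  -- key bilinear identity on basis vectors
  have hb : ∀ i j : Fin n, ⁅b i, b j⁆
      = b.coord N (b i) • ⁅e, b j⁆ - b.coord N (b j) • ⁅e, b i⁆ := by
    intro i j
    rcases eq_or_ne i N with hi | hi
    · rcases eq_or_ne j N with hj | hj
      · subst hi; subst hj; simp [he]
      · subst hi; simp [hcoord, hj, he]
    · rcases eq_or_ne j N with hj | hj
      · subst hj
        rw [show (⁅b i, b N⁆ : L) = -⁅b N, b i⁆ from (lie_skew (b i) (b N)).symm]
        simp [hcoord, hi, he]
      · have hi' : i.val ≤ n - 2 := by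
          have h1 := i.isLt
          have h2 : i.val ≠ n - 1 := fun h => hi (Fin.ext h)
          omega
        have hj' : j.val ≤ n - 2 := by
          have h1 := j.isLt
          have h2 : j.val ≠ n - 1 := fun h => hj (Fin.ext h)
          omega
        simp [hcoord, hi, hj, h0 i j hi' hj']
  -- extend to the first argument being a basis vector
  have step1 : ∀ (Y : L) (i : Fin n),
      ⁅b i, Y⁆ = b.coord N (b i) • ⁅e, Y⁆ - b.coord N Y • ⁅e, b i⁆ := by
    intro Y i
    have hmap : (LieAlgebra.ad ℝ L (b i) : L →ₗ[ℝ] L)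
        = b.coord N (b i) • (LieAlgebra.ad ℝ L e : L →ₗ[ℝ] L)
          - (b.coord N).smulRight ⁅e, b i⁆ := by
      apply b.ext
      intro j
      simpa [LieAlgebra.ad_apply] using hb i j
    simpa [LieAlgebra.ad_apply] using LinearMap.congr_fun hmap Y
  -- full key identity
  have key : ∀ X Y : L,
      ⁅X, Y⁆ = b.coord N X • ⁅e, Y⁆ - b.coord N Y • ⁅e, X⁆ := by
    intro X Y
    have hmap : (-(LieAlgebra.ad ℝ L Y) : L →ₗ[ℝ] L)
        = (b.coord N).smulRight ⁅e, Y⁆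
          - b.coord N Y • (LieAlgebra.ad ℝ L e : L →ₗ[ℝ] L) := by
      apply b.ext
      intro i
      have h1 := step1 Y i
      have h2 : -⁅Y, b i⁆ = ⁅b i, Y⁆ := lie_skew (b i) Y
      simp only [LinearMap.neg_apply, LieAlgebra.ad_apply, LinearMap.sub_apply,
        LinearMap.smulRight_apply, LinearMap.smul_apply, h2, h1]
    have h3 := LinearMap.congr_fun hmap X
    simp only [LinearMap.neg_apply, LieAlgebra.ad_apply, LinearMap.sub_apply,
      LinearMap.smulRight_apply, LinearMap.smul_apply] at h3
    exact (lie_skew X Y).symm.trans h3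
  -- isotropy description
  have hiso : ∀ (ξ : Module.Dual ℝ L) (X : L),
      X ∈ coadjointIsotropy ξ ↔
        ∀ Y : L, b.coord N X * ξ ⁅e, Y⁆ - b.coord N Y * ξ ⁅e, X⁆ = 0 := by
    intro ξ X
    rw [hmem]
    constructor
    · intro h Y
      have h1 := h Y
      rw [key X Y] at h1
      simpa [smul_eq_mul] using h1
    · intro h Y
      rw [key X Y]
      simpa [smul_eq_mul] using h Y
  -- lower bound for all ξ
  have lower : ∀ ξ : Module.Dual ℝ L,
      n - 2 ≤ finrank ℝ (coadjointIsotropy ξ) := by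
    intro ξ
    set Φ : L →ₗ[ℝ] ℝ × ℝ :=
      (b.coord N).prod (ξ.comp (LieAlgebra.ad ℝ L e : L →ₗ[ℝ] L)) with hΦ
    have hker : LinearMap.ker Φ ≤ coadjointIsotropy ξ := by
      intro X hX
      rw [LinearMap.mem_ker] at hX
      have h1 : b.coord N X = 0 := by
        have := congrArg Prod.fst hX
        simpa [hΦ] using this
      have h2 : ξ ⁅e, X⁆ = 0 := by
        have := congrArg Prod.snd hX
        simpa [hΦ, LieAlgebra.ad_apply] using this
      rw [hiso]
      intro Y
      rw [h1, h2]
      ring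
    have hrn := LinearMap.finrank_range_add_finrank_ker Φ
    have hrange : finrank ℝ (LinearMap.range Φ) ≤ 2 := by
      have h4 := Submodule.finrank_le (LinearMap.range Φ)
      simpa using h4
    rw [hfr] at hrn
    have h5 : n - 2 ≤ finrank ℝ (LinearMap.ker Φ) := by omega
    exact h5.trans (Submodule.finrank_mono hker)
  -- the witness ξ₀ = coord at index 0
  set ξ₀ : Module.Dual ℝ L := b.coord ⟨0, h0n⟩ with hξ₀
  set one : Fin n := ⟨1, h1n⟩ with hone_def
  have hone : one ≠ N := by
    intro h
    have := congrArg Fin.val h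
    simp [hN, hone_def] at this
    omega
  have hℓ : ∀ j : Fin n, ξ₀ ⁅e, b j⁆ = if j = one then 1 else 0 := by
    intro j
    have hv : (one : Fin n).val = 1 := rfl
    by_cases hj1 : j = one
    · rw [if_pos hj1, hj1, he, htop one (by simp [hv]) (by rw [hv]; omega)]
      simp [hξ₀, hcoord, Fin.ext_iff, hv]
    · rw [if_neg hj1]
      by_cases hj0 : j.val = 0
      · have hj : j = ⟨0, h0n⟩ := Fin.ext hj0
        rw [hj, he, htop0]
        simp
      · by_cases hjN : j = N
        · rw [hjN, he, lie_self, map_zero]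
        · have h1j : 1 ≤ j.val := by omega
          have h2j : j.val ≤ n - 2 := by
            have h1 := j.isLt
            have h2 : j.val ≠ n - 1 := fun h => hjN (Fin.ext h)
            omega
          rw [he, htop j h1j h2j]
          have hne : j.val ≠ 1 := fun h => hj1 (Fin.ext (by simp [hone_def, h]))
          simp only [hξ₀, hcoord, Fin.ext_iff]
          rw [if_neg]
          omega
  -- ξ₀ ∘ ad e = coord at index 1
  have hℓX : ∀ X : L, ξ₀ ⁅e, X⁆ = b.coord one X := by
    intro X
    have hmap : ξ₀.comp (LieAlgebra.ad ℝ L e : L →ₗ[ℝ] L) = b.coord one := by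
      apply b.ext
      intro j
      simpa [LieAlgebra.ad_apply, hcoord] using hℓ j
    have := LinearMap.congr_fun hmap X
    simpa [LieAlgebra.ad_apply] using this
  -- the isotropy of ξ₀ is the kernel of the surjective map (coord N, coord one)
  set Φ₀ : L →ₗ[ℝ] ℝ × ℝ := (b.coord N).prod (b.coord one) with hΦ₀
  have hiso0 : coadjointIsotropy ξ₀ = LinearMap.ker Φ₀ := by
    ext X
    rw [LinearMap.mem_ker, hiso ξ₀ X]
    have hΦ₀X : Φ₀ X = (b.coord N X, b.coord one X) := rfl
    constructor
    · intro h
      have h1 := h (b one)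
      have h2 := h e
      rw [hℓ one, if_pos rfl, hcoord N one, if_neg hone, hℓX X] at h1
      have hcN : b.coord N X = 0 := by simpa using h1
      have he0 : ξ₀ ⁅e, e⁆ = 0 := by simp
      have hce : b.coord N e = 1 := by rw [he, hcoord N N, if_pos rfl]
      rw [he0, hce, hℓX X] at h2
      have hc1 : b.coord one X = 0 := by simpa using h2
      rw [hΦ₀X, hcN, hc1]
      rfl
    · intro h Y
      have h1 : b.coord N X = 0 := congrArg Prod.fst h
      have h2 : b.coord one X = 0 := congrArg Prod.snd h
      rw [hℓX X, h1, h2]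
      ring
  have hsurj : LinearMap.range Φ₀ = ⊤ := by
    rw [LinearMap.range_eq_top]
    intro p
    refine ⟨p.1 • b N + p.2 • b one, ?_⟩
    have hv1 : Φ₀ (b N) = (1, 0) := by
      have : Φ₀ (b N) = (b.coord N (b N), b.coord one (b N)) := rfl
      rw [this, hcoord N N, if_pos rfl, hcoord one N, if_neg (by
        intro h; exact hone h.symm)]
    have hv2 : Φ₀ (b one) = (0, 1) := by
      have : Φ₀ (b one) = (b.coord N (b one), b.coord one (b one)) := rfl
      rw [this, hcoord N one, if_neg hone, hcoord one one, if_pos rfl]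
    rw [map_add, map_smul, map_smul, hv1, hv2]
    simp [Prod.ext_iff]
  have hiso0rank : finrank ℝ (coadjointIsotropy ξ₀) = n - 2 := by
    have hrn := LinearMap.finrank_range_add_finrank_ker Φ₀
    rw [hfr, hsurj, finrank_top] at hrn
    have h2 : finrank ℝ (ℝ × ℝ) = 2 := by simp
    rw [h2] at hrn
    rw [hiso0]
    omega
  -- conclude
  unfold lieIndex
  apply le_antisymm
  · exact Nat.sInf_le ⟨ξ₀, hiso0rank⟩
  · apply le_csInf ⟨_, Set.mem_range_self 0⟩
    rintro m ⟨ξ, rfl⟩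
    exact lower ξ
end
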